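/- Define R(c) = π₀ · √(2/π) · e^{-c²/2}/c + π_a · K · c/√n for constants π₀, π_a, K > 0 and c > 0. For each n, any minimizer c_n > 1 of R over (0, ∞) satisfies c_n² = log n + O(log log n); in particular c_n²/log n → 1 as n → ∞. -/

import Mathlib

open Filter

/-- Leading-order integrated Bayes risk of the threshold test. -/
noncomputable def leadingRisk (p0 pa K : ℝ) (n : ℕ) (c : ℝ) : ℝ :=
  p0 * Real.sqrt (2 / Real.pi) * Real.exp (-c ^ 2 / 2) / c +
    pa * K * c / Real.sqrt n


lemma aux_foc (A B s c : ℝ) (hA : 0 < A) (hB : 0 < B) (hs : 0 < s) (hc1 : 1 < c)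
    (hmin : IsMinOn (fun x => A * Real.exp (-x ^ 2 / 2) / x + B * x / s) (Set.Ioi 0) c) :
    c ^ 2 = 2 * Real.log s + 2 * Real.log A - 2 * Real.log B
      + 2 * (Real.log (c ^ 2 + 1) - Real.log (c ^ 2)) := by
  have hc0 : (0:ℝ) < c := lt_trans one_pos hc1
  have hcne : c ≠ 0 := ne_of_gt hc0
  -- derivative of inner -x^2/2
  have h1 : HasDerivAt (fun x : ℝ => -x ^ 2 / 2) (-c) c := by
    have := ((hasDerivAt_pow 2 c).neg).div_const 2
    exact this.congr_deriv (by ring)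
  have hexp : HasDerivAt (fun x : ℝ => Real.exp (-x ^ 2 / 2))
      (Real.exp (-c ^ 2 / 2) * (-c)) c := h1.exp
  have hdiv : HasDerivAt (fun x : ℝ => Real.exp (-x ^ 2 / 2) / x)
      ((Real.exp (-c ^ 2 / 2) * (-c) * c - Real.exp (-c ^ 2 / 2) * 1) / c ^ 2) c :=
    hexp.div (hasDerivAt_id c) hcne
  have hfst : HasDerivAt (fun x : ℝ => A * (Real.exp (-x ^ 2 / 2) / x))
      (A * ((Real.exp (-c ^ 2 / 2) * (-c) * c - Real.exp (-c ^ 2 / 2) * 1) / c ^ 2)) c :=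
    hdiv.const_mul A
  have hsnd : HasDerivAt (fun x : ℝ => B * x / s) (B / s) c := by
    have := ((hasDerivAt_id c).const_mul B).div_const s
    exact this.congr_deriv (by ring)
  have hf : HasDerivAt (fun x => A * Real.exp (-x ^ 2 / 2) / x + B * x / s)
      (A * ((Real.exp (-c ^ 2 / 2) * (-c) * c - Real.exp (-c ^ 2 / 2) * 1) / c ^ 2) + B / s) c := by
    have := hfst.add hsnd
    exact this.congr_of_eventuallyEq (Filter.Eventually.of_forall fun x => by simp only [Pi.add_apply]; ring)
  have hloc : IsLocalMin (fun x => A * Real.exp (-x ^ 2 / 2) / x + B * x / s) c :=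
    hmin.isLocalMin (Ioi_mem_nhds hc0)
  have hzero := hloc.hasDerivAt_eq_zero hf
  set E := Real.exp (-c ^ 2 / 2) with hE
  have hEpos : 0 < E := Real.exp_pos _
  -- equation: A * E * (c^2+1)/c^2 = B/s
  have hc2 : (0:ℝ) < c ^ 2 := by positivity
  have heq : E = B * c ^ 2 / (s * A * (c ^ 2 + 1)) := by
    field_simp at hzero ⊢
    nlinarith [hzero]
  -- take logs
  have hlogE : Real.log E = -c ^ 2 / 2 := by rw [hE, Real.log_exp]
  have hne1 : B * c ^ 2 ≠ 0 := by positivity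
  have hne2 : s * A * (c ^ 2 + 1) ≠ 0 := by positivity
  have : Real.log E = Real.log B + Real.log (c ^ 2)
      - (Real.log s + Real.log A + Real.log (c ^ 2 + 1)) := by
    rw [heq, Real.log_div hne1 hne2, Real.log_mul (by positivity) (by positivity),
      Real.log_mul (by positivity) (by positivity), Real.log_mul (by positivity) (by positivity)]
  rw [hlogE] at this
  linarith

lemma aux_bound (p0 pa K : ℝ) (hp0 : 0 < p0) (hpa : 0 < pa) (hK : 0 < K)
    (n : ℕ) (hn : 2 ≤ n) (c : ℝ) (hc1 : 1 < c)
    (hmin : IsMinOn (leadingRisk p0 pa K n) (Set.Ioi 0) c) :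
    |c ^ 2 - Real.log n| ≤
      2 * |Real.log (p0 * Real.sqrt (2 / Real.pi))| + 2 * |Real.log (pa * K)| + 2 * Real.log 2 := by
  set A := p0 * Real.sqrt (2 / Real.pi) with hAdef
  set B := pa * K with hBdef
  have hA : 0 < A := by
    have : 0 < Real.sqrt (2 / Real.pi) := Real.sqrt_pos.2 (by positivity)
    positivity
  have hB : 0 < B := by positivity
  have hnpos : (0:ℝ) < (n:ℝ) := by positivity
  have hs : 0 < Real.sqrt (n:ℝ) := Real.sqrt_pos.2 hnpos
  have hmin' : IsMinOn (fun x => A * Real.exp (-x ^ 2 / 2) / x + B * x / Real.sqrt (n:ℝ))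
      (Set.Ioi 0) c := by
    have : (fun x => A * Real.exp (-x ^ 2 / 2) / x + B * x / Real.sqrt (n:ℝ)) =
        leadingRisk p0 pa K n := by
      funext x; simp [leadingRisk, hAdef, hBdef]
    rw [this]; exact hmin
  have hform := aux_foc A B (Real.sqrt (n:ℝ)) c hA hB hs hc1 hmin'
  have hlogs : Real.log (Real.sqrt (n:ℝ)) = Real.log (n:ℝ) / 2 :=
    Real.log_sqrt (le_of_lt hnpos)
  rw [hlogs] at hform
  have hc2 : (1:ℝ) ≤ c ^ 2 := by nlinarith
  have ht1 : 0 < Real.log (c ^ 2 + 1) - Real.log (c ^ 2) := by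
    have := Real.log_lt_log (by positivity) (by linarith : c ^ 2 < c ^ 2 + 1)
    linarith
  have ht2 : Real.log (c ^ 2 + 1) - Real.log (c ^ 2) ≤ Real.log 2 := by
    have h1 : Real.log (c ^ 2 + 1) ≤ Real.log (2 * c ^ 2) :=
      Real.log_le_log (by positivity) (by nlinarith)
    have h2 : Real.log (2 * c ^ 2) = Real.log 2 + Real.log (c ^ 2) :=
      Real.log_mul (by norm_num) (by positivity)
    linarith
  have h3 : c ^ 2 - Real.log n =
      2 * Real.log A - 2 * Real.log B + 2 * (Real.log (c ^ 2 + 1) - Real.log (c ^ 2)) := by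
    linarith
  rw [h3]
  have h4 := le_abs_self (Real.log A)
  have h5 := neg_abs_le (Real.log A)
  have h6 := le_abs_self (Real.log B)
  have h7 := neg_abs_le (Real.log B)
  rw [abs_le]
  constructor <;> nlinarith

/-- The risk-minimizing threshold lies on the moderate deviation scale: any minimizer
`c_n > 1` of `R(c) = π₀ √(2/π) e^{-c²/2}/c + π_a K c/√n` over `(0,∞)` satisfies
`c_n² = log n + O(log log n)`, and in particular `c_n²/log n → 1`. -/
theorem risk_minimizer_md_scale (p0 pa K : ℝ)
    (hp0 : 0 < p0) (hpa : 0 < pa) (hK : 0 < K)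
    (c : ℕ → ℝ)
    (hc : ∀ n : ℕ, 2 ≤ n → 1 < c n ∧
      IsMinOn (leadingRisk p0 pa K n) (Set.Ioi 0) (c n)) :
    (∃ (C : ℝ) (N : ℕ), ∀ n : ℕ, N ≤ n →
        |c n ^ 2 - Real.log n| ≤ C * Real.log (Real.log n)) ∧
    Tendsto (fun n : ℕ => c n ^ 2 / Real.log n) atTop (nhds 1) := by
  set C₀ : ℝ := 2 * |Real.log (p0 * Real.sqrt (2 / Real.pi))| + 2 * |Real.log (pa * K)|
      + 2 * Real.log 2 with hC₀def
  have hC₀pos : 0 < C₀ := by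
    have h2 : (0:ℝ) < Real.log 2 := Real.log_pos (by norm_num)
    have := abs_nonneg (Real.log (p0 * Real.sqrt (2 / Real.pi)))
    have := abs_nonneg (Real.log (pa * K))
    positivity
  have hbound : ∀ n : ℕ, 2 ≤ n → |c n ^ 2 - Real.log n| ≤ C₀ := fun n hn =>
    aux_bound p0 pa K hp0 hpa hK n hn (c n) (hc n hn).1 (hc n hn).2
  constructor
  · refine ⟨C₀, 25, fun n hn => ?_⟩
    have hn2 : 2 ≤ n := by omega
    have hnR : (25:ℝ) ≤ (n:ℝ) := by exact_mod_cast hn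
    have hloglog : 1 ≤ Real.log (Real.log n) := by
      have hlog3 : (3:ℝ) ≤ Real.log n := by
        rw [Real.le_log_iff_exp_le (by linarith)]
        have h1 : Real.exp 1 < 2.7182818286 := Real.exp_one_lt_d9
        have : Real.exp 3 = Real.exp 1 ^ 3 := by
          rw [← Real.exp_nat_mul]; norm_num
        have hexp3 : Real.exp 3 < 21 := by
          rw [this]
          have h2 : Real.exp 1 ^ 3 < 2.7182818286 ^ 3 :=
            pow_lt_pow_left₀ h1 (Real.exp_pos 1).le (by norm_num)
          have h3 : (2.7182818286:ℝ) ^ 3 < 21 := by norm_num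
          linarith
        linarith
      rw [Real.le_log_iff_exp_le (by linarith)]
      have h1 : Real.exp 1 < 2.7182818286 := Real.exp_one_lt_d9
      linarith
    calc |c n ^ 2 - Real.log n| ≤ C₀ := hbound n hn2
      _ = C₀ * 1 := by ring
      _ ≤ C₀ * Real.log (Real.log n) := by nlinarith
  · have hlog : Tendsto (fun n : ℕ => Real.log n) atTop atTop :=
      Real.tendsto_log_atTop.comp tendsto_natCast_atTop_atTop
    have h0 : Tendsto (fun n : ℕ => C₀ / Real.log n) atTop (nhds 0) :=
      tendsto_const_nhds.div_atTop hlog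
    have hsq : Tendsto (fun n : ℕ => c n ^ 2 / Real.log n - 1) atTop (nhds 0) := by
      apply squeeze_zero_norm' _ h0
      filter_upwards [eventually_ge_atTop 2] with n hn
      have hlogpos : 0 < Real.log n := by
        apply Real.log_pos
        exact_mod_cast (by omega : 1 < n)
      have : c n ^ 2 / Real.log n - 1 = (c n ^ 2 - Real.log n) / Real.log n := by
        field_simp
      rw [Real.norm_eq_abs, this, abs_div, abs_of_pos hlogpos]
      gcongr
      exact hbound n hn
    have := hsq.add (tendsto_const_nhds (x := (1:ℝ)))
    simpa using this
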